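/- Let p be a prime with p ≡ 3 (mod 16), write p = u² + 2v² with u, v positive integers, and set s = (−1)^((u−v)/2). Then for all p-adic integers w, x, y, z ∈ ℤ_p satisfying w² = −2p·x⁴ − p·y⁴ + 2·z⁴, such that not all of w, x, y, z are divisible by p, the element −s·u·x² − v·y² + z² is a unit in ℤ_p (i.e., is not divisible by p). -/

import Mathlib

private lemma neg_one_pow_congr' {m n : ℕ} (h : m % 2 = n % 2) : ((-1 : ℤ)) ^ m = (-1) ^ n := by
  conv_lhs => rw [← Nat.div_add_mod m 2]
  conv_rhs => rw [← Nat.div_add_mod n 2]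
  rw [h, pow_add, pow_add, pow_mul, pow_mul]
  norm_num

private lemma jacobi_key (p : ℕ) [Fact p.Prime] (hmod : p % 16 = 3)
    (u v : ℤ) (hu : 0 < u) (hv : 0 < v) (hp2 : (p : ℤ) = u ^ 2 + 2 * v ^ 2)
    (s : ℤ) (hs : s = (-1) ^ ((u - v) / 2).natAbs) :
    jacobiSym (-s * u * v) p = -1 := by
  have hpp : p.Prime := Fact.out
  have hp4 : p % 4 = 3 := by omega
  have hpodd : Odd p := by rw [Nat.odd_iff]; omega
  -- mod 16 analysis
  have e1 : u * u % 16 = u % 16 * (u % 16) % 16 := Int.mul_emod u u 16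
  have e2 : v * v % 16 = v % 16 * (v % 16) % 16 := Int.mul_emod v v 16
  have h3 : (u * u + 2 * (v * v)) % 16 = 3 := by
    have h' : (p : ℤ) = u * u + 2 * (v * v) := by rw [hp2]; ring
    omega
  have hb1 : 0 ≤ u % 16 := Int.emod_nonneg _ (by norm_num)
  have hb2 : u % 16 < 16 := Int.emod_lt_of_pos _ (by norm_num)
  have hb3 : 0 ≤ v % 16 := Int.emod_nonneg _ (by norm_num)
  have hb4 : v % 16 < 16 := Int.emod_lt_of_pos _ (by norm_num)
  have hu8 : u % 16 % 8 = u % 8 := Int.emod_emod_of_dvd u (by norm_num)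
  have hv2 : v % 16 % 2 = v % 2 := Int.emod_emod_of_dvd v (by norm_num)
  have hmods : (u % 8 = 1 ∨ u % 8 = 7) ∧ v % 2 = 1 := by
    generalize hA : u % 16 = a at e1 hu8 hb1 hb2
    generalize hB : v % 16 = b at e2 hv2 hb3 hb4
    interval_cases a <;> interval_cases b <;> omega
  obtain ⟨hU8, hV2⟩ := hmods
  -- coprimality
  have hgcd : Int.gcd u v = 1 := by
    have h1 : ((Int.gcd u v : ℤ)) ∣ u := Int.gcd_dvd_left u v
    have h2 : ((Int.gcd u v : ℤ)) ∣ v := Int.gcd_dvd_right u v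
    have h3' : ((Int.gcd u v : ℕ)) ^ 2 ∣ p := by
      have : ((Int.gcd u v : ℤ)) ^ 2 ∣ (p : ℤ) := by
        rw [hp2]
        exact dvd_add (pow_dvd_pow_of_dvd h1 2) (Dvd.dvd.mul_left (pow_dvd_pow_of_dvd h2 2) 2)
      exact_mod_cast this
    rcases hpp.eq_one_or_self_of_dvd _ h3' with h | h
    · exact Nat.eq_one_of_mul_eq_one_right (by rw [← sq]; exact h)
    · exfalso
      have hd : Int.gcd u v ∣ p := dvd_trans (dvd_pow_self _ two_ne_zero) h3'
      rcases hpp.eq_one_or_self_of_dvd _ hd with h' | h'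
      · rw [h'] at h; simp at h; omega
      · rw [h'] at h
        have := hpp.one_lt
        nlinarith [sq_nonneg p]
  set U := u.toNat with hUdef
  set V := v.toNat with hVdef
  have hU : (U : ℤ) = u := Int.toNat_of_nonneg hu.le
  have hV : (V : ℤ) = v := Int.toNat_of_nonneg hv.le
  have hUodd : Odd U := by rw [Nat.odd_iff]; omega
  have hVodd : Odd V := by rw [Nat.odd_iff]; omega
  have hpow : ∀ k : ℕ, ((-1 : ℤ)) ^ (k * (p / 2)) = (-1) ^ k := by
    intro k
    rw [pow_mul]
    rcases Nat.even_or_odd k with h | h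
    · rw [h.neg_one_pow, one_pow]
    · rw [h.neg_one_pow, (Nat.odd_iff.mpr (by omega : p / 2 % 2 = 1)).neg_one_pow]
  have hJu : jacobiSym u p = (-1 : ℤ) ^ (U / 2) := by
    have h1 := jacobiSym.quadratic_reciprocity hUodd hpodd
    have h2 : jacobiSym (p : ℤ) U = jacobiSym (2 * v ^ 2) U := by
      apply jacobiSym.mod_left'
      have hrw : (p : ℤ) = 2 * v ^ 2 + (U : ℤ) * u := by rw [hp2, hU]; ring
      rw [hrw, Int.add_mul_emod_self_left]
    have h3 : jacobiSym (2 * v ^ 2) U = 1 := by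
      rw [jacobiSym.mul_left, jacobiSym.sq_one' (show Int.gcd v U = 1 by
          rw [show ((U : ℤ)) = u from hU, Int.gcd_comm]; exact hgcd),
        jacobiSym.at_two hUodd, ZMod.χ₈_nat_eq_if_mod_eight,
        if_neg (by omega : ¬ U % 2 = 0), if_pos (by omega : U % 8 = 1 ∨ U % 8 = 7), mul_one]
    rw [← hU, h1, h2, h3, mul_one, hpow]
  have hJv : jacobiSym v p = (-1 : ℤ) ^ (V / 2) := by
    have h1 := jacobiSym.quadratic_reciprocity hVodd hpodd
    have h2 : jacobiSym (p : ℤ) V = jacobiSym (u ^ 2) V := by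
      apply jacobiSym.mod_left'
      have hrw : (p : ℤ) = u ^ 2 + (V : ℤ) * (2 * v) := by rw [hp2, hV]; ring
      rw [hrw, Int.add_mul_emod_self_left]
    have h3 : jacobiSym (u ^ 2) V = 1 :=
      jacobiSym.sq_one' (show Int.gcd u V = 1 by rw [show ((V : ℤ)) = v from hV]; exact hgcd)
    rw [← hV, h1, h2, h3, mul_one, hpow]
  have hJuv : jacobiSym (u * v) p = s := by
    rw [jacobiSym.mul_left, hJu, hJv, ← pow_add, hs]
    exact neg_one_pow_congr' (by omega)
  have hJneg : jacobiSym (-1) p = -1 := by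
    rw [jacobiSym.at_neg_one hpodd, ZMod.χ₄_nat_eq_if_mod_four,
      if_neg (by omega : ¬ p % 2 = 0), if_neg (by omega : ¬ p % 4 = 1)]
  have hs1 : s = 1 ∨ s = -1 := by
    rcases Nat.even_or_odd ((u - v) / 2).natAbs with h | h
    · exact Or.inl (by rw [hs, h.neg_one_pow])
    · exact Or.inr (by rw [hs, h.neg_one_pow])
  rcases hs1 with h | h
  · rw [show -s * u * v = -1 * (u * v) by rw [h]; ring, jacobiSym.mul_left, hJneg, hJuv, h]
    ring
  · rw [show -s * u * v = u * v by rw [h]; ring, hJuv, h]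

/-- Claim (iii) of Example 7.1: for a prime `p ≡ 3 (mod 16)` with `p = u² + 2v²` and
`s = (−1)^((u−v)/2)`, at every primitive `p`-adic integral point of
`w² = −2p·x⁴ − p·y⁴ + 2·z⁴` the element `−s·u·x² − v·y² + z²` is a unit in `ℤ_p`. -/
theorem unramified_at_p_adic_points (p : ℕ) [Fact p.Prime] (hmod : p % 16 = 3)
    (u v : ℤ) (hu : 0 < u) (hv : 0 < v) (hp2 : (p : ℤ) = u ^ 2 + 2 * v ^ 2)
    (s : ℤ) (hs : s = (-1) ^ ((u - v) / 2).natAbs)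
    (w x y z : ℤ_[p])
    (heq : w ^ 2 = -2 * (p : ℤ_[p]) * x ^ 4 - (p : ℤ_[p]) * y ^ 4 + 2 * z ^ 4)
    (hnz : ¬((p : ℤ_[p]) ∣ w ∧ (p : ℤ_[p]) ∣ x ∧ (p : ℤ_[p]) ∣ y ∧ (p : ℤ_[p]) ∣ z)) :
    IsUnit (-(s : ℤ_[p]) * (u : ℤ_[p]) * x ^ 2 - (v : ℤ_[p]) * y ^ 2 + z ^ 2) := by
  have hpp : p.Prime := Fact.out
  have hp0 : (p : ℤ_[p]) ≠ 0 := Nat.cast_ne_zero.mpr hpp.ne_zero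
  by_contra hns
  have hdvd : (p : ℤ_[p]) ∣ (-(s : ℤ_[p]) * (u : ℤ_[p]) * x ^ 2 - (v : ℤ_[p]) * y ^ 2 + z ^ 2) :=
    (PadicInt.norm_lt_one_iff_dvd _).mp (PadicInt.not_isUnit_iff.mp hns)
  have hker : ∀ a : ℤ_[p], PadicInt.toZMod a = 0 ↔ (p : ℤ_[p]) ∣ a := by
    intro a
    rw [← RingHom.mem_ker, PadicInt.ker_toZMod, PadicInt.maximalIdeal_eq_span_p,
      Ideal.mem_span_singleton]
  set θ : ℤ_[p] →+* ZMod p := PadicInt.toZMod with hθ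
  -- w² = 2 z⁴ mod p
  have hW2 : (θ w) ^ 2 = 2 * (θ z) ^ 4 := by
    have := congrArg θ heq
    simpa [map_pow, map_mul, map_sub, map_add, map_neg, map_ofNat, map_natCast,
      ZMod.natCast_self] using this
  have h2ns : ¬ IsSquare (2 : ZMod p) := by
    rw [ZMod.exists_sq_eq_two_iff (by omega : p ≠ 2)]
    omega
  have hZ : θ z = 0 := by
    by_contra hZ
    apply h2ns
    refine ⟨θ w * ((θ z) ^ 2)⁻¹, ?_⟩
    have hz2 : (θ z) ^ 2 ≠ 0 := pow_ne_zero _ hZ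
    field_simp
    linear_combination -hW2
  have hW : θ w = 0 := by
    have h4 : (θ w) ^ 2 = 0 := by rw [hW2, hZ]; ring
    exact pow_eq_zero_iff (two_ne_zero) |>.mp h4
  have hpw : (p : ℤ_[p]) ∣ w := (hker w).mp hW
  have hpz : (p : ℤ_[p]) ∣ z := (hker z).mp hZ
  obtain ⟨a, ha⟩ := hpw
  obtain ⟨c, hc⟩ := hpz
  have hcancel : 2 * x ^ 4 + y ^ 4 = (p : ℤ_[p]) * (2 * (p : ℤ_[p]) ^ 2 * c ^ 4 - a ^ 2) := by
    apply mul_left_cancel₀ hp0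
    linear_combination heq - (w + (p : ℤ_[p]) * a) * ha +
      2 * (z ^ 3 + z ^ 2 * ((p : ℤ_[p]) * c) + z * ((p : ℤ_[p]) * c) ^ 2 +
        ((p : ℤ_[p]) * c) ^ 3) * hc
  have h2xy : 2 * (θ x) ^ 4 + (θ y) ^ 4 = 0 := by
    have hd : (p : ℤ_[p]) ∣ (2 * x ^ 4 + y ^ 4) := ⟨_, hcancel⟩
    have := (hker _).mpr hd
    simpa [map_add, map_mul, map_pow, map_ofNat] using this
  have hX : θ x ≠ 0 := by
    intro h0
    apply hnz
    have hy4 : (θ y) ^ 4 = 0 := by rw [h0] at h2xy; linear_combination h2xy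
    have hy : θ y = 0 := pow_eq_zero_iff (by norm_num) |>.mp hy4
    exact ⟨⟨a, ha⟩, (hker x).mp h0, (hker y).mp hy, ⟨c, hc⟩⟩
  have halpha : -(s : ZMod p) * (u : ZMod p) * (θ x) ^ 2 - (v : ZMod p) * (θ y) ^ 2
      + (θ z) ^ 2 = 0 := by
    have := (hker _).mpr hdvd
    simpa [map_sub, map_add, map_mul, map_pow, map_neg, map_intCast] using this
  have hvy : (v : ZMod p) * (θ y) ^ 2 = -(s : ZMod p) * (u : ZMod p) * (θ x) ^ 2 := by
    linear_combination (-1 : ZMod p) * halpha + (θ z) * hZ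
  have hsq : IsSquare (((-s * u * v : ℤ)) : ZMod p) := by
    refine ⟨(v : ZMod p) * θ y * (θ x)⁻¹, ?_⟩
    push_cast
    field_simp
    linear_combination (-(v : ZMod p)) * hvy
  exact ZMod.nonsquare_of_jacobiSym_eq_neg_one
    (jacobi_key p hmod u v hu hv hp2 s hs) hsq
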